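/- Let d, m ≥ 1, let X, R ∈ ℝ^{d×m}, let v ∈ ℝ^d, and let α ≥ 0, β > 0, δ > 0 be real parameters. Let Γ ∈ ℝ^m be any minimizer of the regularized least-squares objective Γ' ↦ ‖v − RΓ'‖₂² + δ‖XΓ'‖₂², and set Hv := βv − α(X + βR)Γ (the damped, adaptively regularized Anderson mixing update applied to v). Then ‖Hv‖₂² ≤ 2(β²(1 + 2α² − 2α) + α²δ⁻¹)‖v‖₂². -/

import Mathlib

open Matrix

/-- The Euclidean (ℓ₂) norm of a vector in `ℝ^n`. -/
noncomputable def norm2 {n : ℕ} (v : Fin n → ℝ) : ℝ := Real.sqrt (∑ i, v i ^ 2)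

lemma norm2_eq_norm {n : ℕ} (w : Fin n → ℝ) :
    norm2 w = ‖(WithLp.equiv 2 (Fin n → ℝ)).symm w‖ := by
  rw [EuclideanSpace.norm_eq, norm2]
  congr 1
  refine Finset.sum_congr rfl fun i _ => ?_
  rw [show ((WithLp.equiv 2 (Fin n → ℝ)).symm w).ofLp i = w i from rfl, Real.norm_eq_abs, sq_abs]

lemma norm2_nonneg {n : ℕ} (w : Fin n → ℝ) : 0 ≤ norm2 w :=
  Real.sqrt_nonneg _

lemma norm2_add_le {n : ℕ} (a b : Fin n → ℝ) :
    norm2 (a + b) ≤ norm2 a + norm2 b := by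
  simp only [norm2_eq_norm]
  exact norm_add_le ((WithLp.equiv 2 (Fin n → ℝ)).symm a)
    ((WithLp.equiv 2 (Fin n → ℝ)).symm b)

lemma norm2_smul {n : ℕ} (c : ℝ) (w : Fin n → ℝ) :
    norm2 (c • w) = |c| * norm2 w := by
  simp only [norm2_eq_norm]
  rw [show (WithLp.equiv 2 (Fin n → ℝ)).symm (c • w)
      = c • (WithLp.equiv 2 (Fin n → ℝ)).symm w from rfl, norm_smul, Real.norm_eq_abs]

lemma norm2_zero {n : ℕ} : norm2 (0 : Fin n → ℝ) = 0 := by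
  simp [norm2]

/-- **Lemma 1** (norm bound for the damped, adaptively regularized Anderson mixing update).
If `Γ` minimizes `Γ' ↦ ‖v − RΓ'‖₂² + δ‖XΓ'‖₂²` and `Hv := βv − α(X + βR)Γ`, then
`‖Hv‖₂² ≤ 2(β²(1 + 2α² − 2α) + α²δ⁻¹)‖v‖₂²`. -/
theorem sam_update_norm_bound (d m : ℕ) (hd : 1 ≤ d) (hm : 1 ≤ m)
    (X R : Matrix (Fin d) (Fin m) ℝ) (v : Fin d → ℝ)
    (α β δ : ℝ) (hα : 0 ≤ α) (hβ : 0 < β) (hδ : 0 < δ)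
    (Γ : Fin m → ℝ)
    (hΓ : ∀ Γ' : Fin m → ℝ,
      norm2 (v - R.mulVec Γ) ^ 2 + δ * norm2 (X.mulVec Γ) ^ 2 ≤
        norm2 (v - R.mulVec Γ') ^ 2 + δ * norm2 (X.mulVec Γ') ^ 2) :
    norm2 (β • v - α • ((X + β • R).mulVec Γ)) ^ 2 ≤
      2 * (β ^ 2 * (1 + 2 * α ^ 2 - 2 * α) + α ^ 2 * δ⁻¹) * norm2 v ^ 2 := by
  set r : Fin d → ℝ := v - R.mulVec Γ with hrdef
  set x : Fin d → ℝ := X.mulVec Γ with hxdef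
  set A := norm2 v with hA
  set B := norm2 r with hB
  set C := norm2 x with hC
  -- minimality at Γ' = 0
  have h0 : B ^ 2 + δ * C ^ 2 ≤ A ^ 2 := by
    have := hΓ 0
    simpa [Matrix.mulVec_zero, norm2_zero] using this
  have hA0 : 0 ≤ A := norm2_nonneg v
  have hB0 : 0 ≤ B := norm2_nonneg r
  have hC0 : 0 ≤ C := norm2_nonneg x
  -- the vector identity
  have hid : β • v - α • ((X + β • R).mulVec Γ)
      = (β - α * β) • v + (α • (β • r - x)) := by
    funext i
    simp only [Pi.smul_apply, Pi.add_apply, Pi.sub_apply, Matrix.add_mulVec,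
      Matrix.smul_mulVec, smul_eq_mul, hrdef, hxdef]
    ring
  -- triangle inequality
  have hsub : norm2 (β • r - x) ≤ β * B + C := by
    have heq : β • r - x = β • r + (-1 : ℝ) • x := by
      funext i; simp [Pi.sub_apply]; ring
    rw [heq]
    refine (norm2_add_le _ _).trans ?_
    rw [norm2_smul, norm2_smul, abs_of_pos hβ]
    simp
    exact le_rfl
  have h1 : norm2 (β • v - α • ((X + β • R).mulVec Γ))
      ≤ |β - α * β| * A + α * (β * B + C) := by
    rw [hid]
    refine (norm2_add_le _ _).trans ?_
    rw [norm2_smul, norm2_smul, abs_of_nonneg hα]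
    exact add_le_add le_rfl (mul_le_mul_of_nonneg_left hsub hα)
  -- weighted Cauchy–Schwarz: (βB + C)² ≤ (β² + δ⁻¹)(B² + δC²) ≤ (β² + δ⁻¹)A²
  have hδi : 0 < δ⁻¹ := inv_pos.mpr hδ
  have hδδ : δ⁻¹ * δ = 1 := inv_mul_cancel₀ hδ.ne'
  have h2 : (β * B + C) ^ 2 ≤ (β ^ 2 + δ⁻¹) * A ^ 2 := by
    have key : 0 ≤ δ⁻¹ * (β * δ * C - B) ^ 2 := mul_nonneg hδi.le (sq_nonneg _)
    have h0' : (β ^ 2 + δ⁻¹) * (B ^ 2 + δ * C ^ 2) ≤ (β ^ 2 + δ⁻¹) * A ^ 2 := by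
      apply mul_le_mul_of_nonneg_left h0
      positivity
    nlinarith [key, h0', hδδ]
  -- put it together
  have hS0 : 0 ≤ |β - α * β| * A + α * (β * B + C) := by positivity
  have h4 : norm2 (β • v - α • ((X + β • R).mulVec Γ)) ^ 2
      ≤ (|β - α * β| * A + α * (β * B + C)) ^ 2 :=
    pow_le_pow_left₀ (norm2_nonneg _) h1 2
  have habs : |β - α * β| ^ 2 = (β - α * β) ^ 2 := sq_abs _
  have h3 : α ^ 2 * (β * B + C) ^ 2 ≤ α ^ 2 * ((β ^ 2 + δ⁻¹) * A ^ 2) :=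
    mul_le_mul_of_nonneg_left h2 (sq_nonneg α)
  nlinarith [h4, h3, sq_nonneg (|β - α * β| * A - α * (β * B + C)), habs,
    abs_nonneg (β - α * β), mul_nonneg hA0 (mul_nonneg hα (abs_nonneg (β - α * β)))]
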